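/- There exists a constant C > 0 such that for every ν ∈ (-1,1) \ {0} and every integer k > 0, C⁻¹·((1-ν)/(1+ν))·(1+k)^(-ν) ≤ ∏_{i=1}^{k} (2i-1-ν)/(2i-1+ν) ≤ C·((1-ν)/(1+ν))·(1+k)^(-ν). -/

import Mathlib

open Finset

private lemma aux_le_log {t : ℝ} (ht : 0 < t) : 1 - t⁻¹ ≤ Real.log t := by
  have h := Real.log_le_sub_one_of_pos (inv_pos.mpr ht)
  rw [Real.log_inv] at h
  linarith

private lemma log_ratio_bound {x : ℝ} (hx : |x| ≤ 1/3) :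
    |Real.log ((1-x)/(1+x)) + 2*x| ≤ (3/2)*x^2 := by
  rw [abs_le] at hx
  obtain ⟨hx1, hx2⟩ := hx
  have h1 : (0:ℝ) < 1 - x := by linarith
  have h2 : (0:ℝ) < 1 + x := by linarith
  rw [Real.log_div (ne_of_gt h1) (ne_of_gt h2)]
  have hu1 : Real.log (1-x) ≤ -x := by
    have := Real.log_le_sub_one_of_pos h1; linarith
  have hu2 : Real.log (1+x) ≤ x := by
    have := Real.log_le_sub_one_of_pos h2; linarith
  have hl1 : 1 - (1-x)⁻¹ ≤ Real.log (1-x) := aux_le_log h1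
  have hl2 : 1 - (1+x)⁻¹ ≤ Real.log (1+x) := aux_le_log h2
  have hi1 : (1-x)⁻¹ ≤ 1 + x + (3/2)*x^2 := by
    rw [inv_le_iff_one_le_mul₀ h1]; nlinarith
  have hi2 : (1+x)⁻¹ ≤ 1 - x + (3/2)*x^2 := by
    rw [inv_le_iff_one_le_mul₀ h2]; nlinarith
  rw [abs_le]
  constructor <;> linarith

private lemma sum_sq_bound : ∀ k : ℕ, 1 ≤ k →
    ∑ i ∈ Icc 2 k, (1:ℝ)/(2*(i:ℝ)-1)^2 ≤ 1/2 - 1/(2*(2*(k:ℝ)-1)) := by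
  intro k hk
  induction k, hk using Nat.le_induction with
  | base => norm_num
  | succ n hn ih =>
    rw [Finset.sum_Icc_succ_top (by omega : 2 ≤ n + 1)]
    have hN : (1:ℝ) ≤ (n:ℝ) := by exact_mod_cast hn
    push_cast
    have key : (1:ℝ)/(2*((n:ℝ)+1)-1)^2 ≤ 1/(2*(2*(n:ℝ)-1)) - 1/(2*(2*((n:ℝ)+1)-1)) := by
      rw [div_sub_div _ _ (by nlinarith) (by nlinarith), div_le_div_iff₀ (by nlinarith) (by nlinarith)]
      ring_nf
      nlinarith
    linarith

private lemma sum_L_lower : ∀ k : ℕ, 1 ≤ k →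
    Real.log (2*(k:ℝ)+1) - Real.log 3 ≤ ∑ i ∈ Icc 2 k, 2/(2*(i:ℝ)-1) := by
  intro k hk
  induction k, hk using Nat.le_induction with
  | base => norm_num
  | succ n hn ih =>
    rw [Finset.sum_Icc_succ_top (by omega : 2 ≤ n + 1)]
    have hN : (1:ℝ) ≤ (n:ℝ) := by exact_mod_cast hn
    push_cast
    have h1 : (0:ℝ) < 2*(n:ℝ)+1 := by linarith
    have h2 : (0:ℝ) < 2*((n:ℝ)+1)+1 := by linarith
    have key : Real.log (2*((n:ℝ)+1)+1) - Real.log (2*(n:ℝ)+1) ≤ 2/(2*((n:ℝ)+1)-1) := by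
      rw [← Real.log_div (ne_of_gt h2) (ne_of_gt h1)]
      have := Real.log_le_sub_one_of_pos (div_pos h2 h1)
      have heq : (2*((n:ℝ)+1)+1)/(2*(n:ℝ)+1) - 1 = 2/(2*(n:ℝ)+1) := by
        field_simp; ring
      rw [heq] at this
      calc Real.log ((2*((n:ℝ)+1)+1)/(2*(n:ℝ)+1)) ≤ 2/(2*(n:ℝ)+1) := this
        _ ≤ 2/(2*((n:ℝ)+1)-1) := by rw [div_le_div_iff₀ h1 (by linarith)]; nlinarith
    linarith

private lemma sum_L_upper : ∀ k : ℕ, 1 ≤ k →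
    ∑ i ∈ Icc 2 k, 2/(2*(i:ℝ)-1) ≤ Real.log (2*(k:ℝ)-1) := by
  intro k hk
  induction k, hk using Nat.le_induction with
  | base => norm_num
  | succ n hn ih =>
    rw [Finset.sum_Icc_succ_top (by omega : 2 ≤ n + 1)]
    have hN : (1:ℝ) ≤ (n:ℝ) := by exact_mod_cast hn
    push_cast
    have h1 : (0:ℝ) < 2*(n:ℝ)-1 := by linarith
    have h2 : (0:ℝ) < 2*((n:ℝ)+1)-1 := by linarith
    have key : 2/(2*((n:ℝ)+1)-1) ≤ Real.log (2*((n:ℝ)+1)-1) - Real.log (2*(n:ℝ)-1) := by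
      rw [← Real.log_div (ne_of_gt h2) (ne_of_gt h1)]
      have := aux_le_log (div_pos h2 h1)
      have heq : 1 - ((2*((n:ℝ)+1)-1)/(2*(n:ℝ)-1))⁻¹ = 2/(2*((n:ℝ)+1)-1) := by
        rw [inv_div]; field_simp; ring
      rw [heq] at this
      exact this
    linarith

theorem stmt4 : ∃ C : ℝ, 0 < C ∧ ∀ ν : ℝ, ν ∈ Set.Ioo (-1 : ℝ) 1 → ν ≠ 0 → ∀ k : ℕ, 0 < k →
    C⁻¹ * ((1 - ν) / (1 + ν)) * (1 + (k : ℝ)) ^ (-ν) ≤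
      (∏ i ∈ Finset.Icc 1 k, (2 * (i : ℝ) - 1 - ν) / (2 * (i : ℝ) - 1 + ν)) ∧
    (∏ i ∈ Finset.Icc 1 k, (2 * (i : ℝ) - 1 - ν) / (2 * (i : ℝ) - 1 + ν)) ≤
      C * ((1 - ν) / (1 + ν)) * (1 + (k : ℝ)) ^ (-ν) := by
  refine ⟨Real.exp 4, Real.exp_pos 4, ?_⟩
  intro ν hν hν0 k hk
  obtain ⟨hν1, hν2⟩ := hν
  have hk1 : 1 ≤ k := hk
  have hkR : (1:ℝ) ≤ (k:ℝ) := by exact_mod_cast hk1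
  set a : ℕ → ℝ := fun i => (2*(i:ℝ)-1-ν)/(2*(i:ℝ)-1+ν) with ha
  have hapos : ∀ i : ℕ, 1 ≤ i → 0 < a i := by
    intro i hi
    have hiR : (1:ℝ) ≤ (i:ℝ) := by exact_mod_cast hi
    show (0:ℝ) < (2*(i:ℝ)-1-ν)/(2*(i:ℝ)-1+ν)
    exact div_pos (by linarith) (by linarith)
  have hsplit : (∏ i ∈ Finset.Icc 1 k, a i) = ((1-ν)/(1+ν)) * ∏ i ∈ Finset.Icc 2 k, a i := by
    rw [← Finset.insert_Icc_add_one_left_eq_Icc hk1, Finset.prod_insert (by simp)]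
    norm_num [ha]
  set Q := ∏ i ∈ Finset.Icc 2 k, a i with hQdef
  have hQpos : 0 < Q :=
    Finset.prod_pos (fun i hi => hapos i (le_trans (by norm_num) (Finset.mem_Icc.mp hi).1))
  set t := Real.log (1 + (k:ℝ)) with hts
  have hk0 : (0:ℝ) < 1 + (k:ℝ) := by linarith
  have hlogQ : Real.log Q = ∑ i ∈ Finset.Icc 2 k, Real.log (a i) :=
    Real.log_prod (fun i hi => ne_of_gt (hapos i (le_trans (by norm_num) (Finset.mem_Icc.mp hi).1)))
  have hterm : ∀ i ∈ Finset.Icc 2 k,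
      |Real.log (a i) + ν * (2/(2*(i:ℝ)-1))| ≤ (3/2) * ((1:ℝ)/(2*(i:ℝ)-1)^2) := by
    intro i hi
    have h2i : 2 ≤ i := (Finset.mem_Icc.mp hi).1
    have h2iR : (2:ℝ) ≤ (i:ℝ) := by exact_mod_cast h2i
    have h3 : (3:ℝ) ≤ 2*(i:ℝ)-1 := by linarith
    have hc : (0:ℝ) < 2*(i:ℝ)-1 := by linarith
    set x := ν / (2*(i:ℝ)-1) with hx
    have hxb : |x| ≤ 1/3 := by
      rw [hx, abs_div, abs_of_pos hc, div_le_iff₀ hc]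
      have : |ν| ≤ 1 := abs_le.mpr ⟨le_of_lt hν1, le_of_lt hν2⟩
      nlinarith
    have hfa : a i = (1-x)/(1+x) := by
      show (2*(i:ℝ)-1-ν)/(2*(i:ℝ)-1+ν) = (1-x)/(1+x)
      have hB : (2*(i:ℝ)-1+ν) ≠ 0 := ne_of_gt (by linarith)
      rw [hx, one_sub_div (ne_of_gt hc), one_add_div (ne_of_gt hc)]
      field_simp
    have hnu2x : ν * (2/(2*(i:ℝ)-1)) = 2*x := by rw [hx]; ring
    rw [hfa, hnu2x]
    calc |Real.log ((1-x)/(1+x)) + 2*x| ≤ (3/2)*x^2 := log_ratio_bound hxb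
      _ ≤ (3/2) * ((1:ℝ)/(2*(i:ℝ)-1)^2) := by
          rw [hx, div_pow]
          have : |ν| ≤ 1 := abs_le.mpr ⟨le_of_lt hν1, le_of_lt hν2⟩
          have hν2' : ν^2 ≤ 1 := by nlinarith
          have hcp : (0:ℝ) < (2*(i:ℝ)-1)^2 := by positivity
          gcongr
  have hsum1 : |∑ i ∈ Finset.Icc 2 k, (Real.log (a i) + ν*(2/(2*(i:ℝ)-1)))| ≤ 3/4 := by
    calc |∑ i ∈ Finset.Icc 2 k, (Real.log (a i) + ν*(2/(2*(i:ℝ)-1)))|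
        ≤ ∑ i ∈ Finset.Icc 2 k, |Real.log (a i) + ν*(2/(2*(i:ℝ)-1))| :=
          Finset.abs_sum_le_sum_abs _ _
      _ ≤ ∑ i ∈ Finset.Icc 2 k, (3/2) * ((1:ℝ)/(2*(i:ℝ)-1)^2) := Finset.sum_le_sum hterm
      _ = (3/2) * ∑ i ∈ Finset.Icc 2 k, (1:ℝ)/(2*(i:ℝ)-1)^2 := by rw [Finset.mul_sum]
      _ ≤ 3/4 := by
          have h1 := sum_sq_bound k hk1
          have h2 : (0:ℝ) < 1/(2*(2*(k:ℝ)-1)) := by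
            apply div_pos one_pos; linarith
          nlinarith
  set L := ∑ i ∈ Finset.Icc 2 k, 2/(2*(i:ℝ)-1) with hLs
  have hL := sum_L_lower k hk1
  have hU := sum_L_upper k hk1
  have habs2 : |t - L| ≤ 2 := by
    have l3 : Real.log 3 ≤ 2 := by
      have := Real.log_le_sub_one_of_pos (by norm_num : (0:ℝ) < 3); linarith
    have l2' : Real.log 2 ≤ 1 := by
      have := Real.log_le_sub_one_of_pos (by norm_num : (0:ℝ) < 2); linarith
    have m1 : t ≤ Real.log (2*(k:ℝ)+1) :=
      Real.log_le_log hk0 (by linarith)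
    have m2 : Real.log (2*(k:ℝ)-1) ≤ Real.log 2 + t := by
      rw [hts, ← Real.log_mul (by norm_num) (ne_of_gt hk0)]
      exact Real.log_le_log (by linarith) (by linarith)
    rw [abs_le]
    constructor <;> linarith
  have hkey : |Real.log Q + ν * t| ≤ 3 := by
    have hsum_eq : Real.log Q + ν * t =
        (∑ i ∈ Finset.Icc 2 k, (Real.log (a i) + ν*(2/(2*(i:ℝ)-1)))) + ν * (t - L) := by
      rw [hlogQ, Finset.sum_add_distrib, ← Finset.mul_sum, ← hLs]; ring
    rw [hsum_eq]
    have habsν : |ν| ≤ 1 := abs_le.mpr ⟨le_of_lt hν1, le_of_lt hν2⟩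
    have h2 : |ν * (t - L)| ≤ 2 := by
      rw [abs_mul]
      nlinarith [abs_nonneg (t - L), abs_nonneg ν]
    calc |(∑ i ∈ Finset.Icc 2 k, (Real.log (a i) + ν*(2/(2*(i:ℝ)-1)))) + ν * (t - L)|
        ≤ |∑ i ∈ Finset.Icc 2 k, (Real.log (a i) + ν*(2/(2*(i:ℝ)-1)))| + |ν * (t - L)| :=
          abs_add_le _ _
      _ ≤ 3 := by linarith
  obtain ⟨hkey1, hkey2⟩ := abs_le.mp hkey
  have hrpow : (1 + (k:ℝ)) ^ (-ν) = Real.exp (-(ν*t)) := by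
    rw [Real.rpow_def_of_pos hk0, hts]; ring_nf
  have hfrac : 0 < (1-ν)/(1+ν) := div_pos (by linarith) (by linarith)
  rw [hsplit]
  constructor
  · have h1 : (Real.exp 4)⁻¹ * (1+(k:ℝ))^(-ν) ≤ Q := by
      rw [hrpow, ← Real.exp_neg, ← Real.exp_add, ← Real.exp_log hQpos]
      apply Real.exp_le_exp.mpr
      linarith
    calc (Real.exp 4)⁻¹ * ((1-ν)/(1+ν)) * (1+(k:ℝ))^(-ν)
        = ((1-ν)/(1+ν)) * ((Real.exp 4)⁻¹ * (1+(k:ℝ))^(-ν)) := by ring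
      _ ≤ ((1-ν)/(1+ν)) * Q := mul_le_mul_of_nonneg_left h1 (le_of_lt hfrac)
  · have h1 : Q ≤ Real.exp 4 * (1+(k:ℝ))^(-ν) := by
      rw [hrpow, ← Real.exp_add, ← Real.exp_log hQpos]
      apply Real.exp_le_exp.mpr
      linarith
    calc ((1-ν)/(1+ν)) * Q ≤ ((1-ν)/(1+ν)) * (Real.exp 4 * (1+(k:ℝ))^(-ν)) :=
          mul_le_mul_of_nonneg_left h1 (le_of_lt hfrac)
      _ = Real.exp 4 * ((1-ν)/(1+ν)) * (1+(k:ℝ))^(-ν) := by ring
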